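/- If ‖V_t‖ < 1, then I − V_t V_t^* is an isomorphism of H and im(Q_{T-t}^{1/2}) = im(Q_T^{1/2}). -/

import Mathlib

open ContinuousLinearMap
open scoped RealInnerProductSpace

private lemma le_of_sq_le_sq' (a b : ℝ) (_ha : 0 ≤ a) (hb : 0 ≤ b) (h : a ^ 2 ≤ b ^ 2) :
    a ≤ b := by nlinarith

private lemma sa_inner
    {H : Type*} [NormedAddCommGroup H] [InnerProductSpace ℝ H] [CompleteSpace H]
    {A : H →L[ℝ] H} (hA : IsSelfAdjoint A) (x y : H) : ⟪A x, y⟫ = ⟪x, A y⟫ := by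
  nth_rewrite 1 [← hA.adjoint_eq]
  exact adjoint_inner_left A y x

/-- Douglas-type lemma: a norm domination between self-adjoint operators
gives a range inclusion. -/
private lemma range_subset_of_norm_le
    {H : Type*} [NormedAddCommGroup H] [InnerProductSpace ℝ H] [CompleteSpace H]
    (A B : H →L[ℝ] H) (hA : IsSelfAdjoint A) (hB : IsSelfAdjoint B) (c : ℝ)
    (h : ∀ x, ‖A x‖ ≤ c * ‖B x‖) : Set.range A ⊆ Set.range B := by
  rintro _ ⟨u, rfl⟩
  -- ker B ⊆ ker A, so A is constant on fibers of B
  have hker : ∀ x y : H, B x = B y → A x = A y := by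
    intro x y hxy
    have h1 : ‖A (x - y)‖ ≤ c * ‖B (x - y)‖ := h (x - y)
    rw [map_sub, map_sub, hxy, sub_self, norm_zero, mul_zero] at h1
    exact sub_eq_zero.mp (norm_le_zero_iff.mp h1)
  set p : Submodule ℝ H := LinearMap.range (B : H →ₗ[ℝ] H) with hp
  have pick : ∀ z : p, ∃ x : H, B x = (z : H) := fun z => z.2
  choose pk hpk using pick
  have key : ∀ (z : p) (x : H), B x = (z : H) → A (pk z) = A x := by
    intro z x hx; exact hker _ _ (by rw [hpk z, hx])
  -- the functional  B x ↦ ⟪u, A x⟫  on range B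
  let φ : p →ₗ[ℝ] ℝ :=
    { toFun := fun z => ⟪u, A (pk z)⟫
      map_add' := by
        intro z w
        have h0 : A (pk (z + w)) = A (pk z + pk w) := by
          apply key
          rw [map_add, hpk, hpk]; rfl
        show ⟪u, A (pk (z + w))⟫ = ⟪u, A (pk z)⟫ + ⟪u, A (pk w)⟫
        rw [h0, map_add, inner_add_right]
      map_smul' := by
        intro r z
        have h0 : A (pk (r • z)) = A (r • pk z) := by
          apply key
          rw [map_smul, hpk]; rfl
        show ⟪u, A (pk (r • z))⟫ = r • ⟪u, A (pk z)⟫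
        rw [h0, map_smul, inner_smul_right]; rfl }
  have hφbound : ∀ z : p, ‖φ z‖ ≤ (c * ‖u‖) * ‖z‖ := by
    intro z
    have h1 : ‖⟪u, A (pk z)⟫‖ ≤ ‖u‖ * ‖A (pk z)‖ := norm_inner_le_norm _ _
    have h2 : ‖A (pk z)‖ ≤ c * ‖B (pk z)‖ := h _
    have h3 : ‖B (pk z)‖ = ‖z‖ := by rw [hpk]; rfl
    calc ‖φ z‖ ≤ ‖u‖ * ‖A (pk z)‖ := h1
      _ ≤ ‖u‖ * (c * ‖B (pk z)‖) := by
          apply mul_le_mul_of_nonneg_left h2 (norm_nonneg u)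
      _ = (c * ‖u‖) * ‖z‖ := by rw [h3]; ring
  let φc : p →L[ℝ] ℝ := LinearMap.mkContinuous φ (c * ‖u‖) hφbound
  obtain ⟨g, hg, -⟩ := exists_extension_norm_eq p φc
  set v : H := (InnerProductSpace.toDual ℝ H).symm g with hv
  refine ⟨v, ?_⟩
  apply ext_inner_right ℝ
  intro x
  have hBx : B x ∈ p := LinearMap.mem_range_self _ x
  have h1 : ⟪B v, x⟫ = ⟪v, B x⟫ := sa_inner hB v x
  have h2 : ⟪v, B x⟫ = g (B x) := InnerProductSpace.toDual_symm_apply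
  have h3 : g (B x) = φc ⟨B x, hBx⟩ := hg ⟨B x, hBx⟩
  have h4 : φc ⟨B x, hBx⟩ = ⟪u, A x⟫ := by
    show ⟪u, A (pk ⟨B x, hBx⟩)⟫ = ⟪u, A x⟫
    rw [key ⟨B x, hBx⟩ x rfl]
  have h5 : ⟪u, A x⟫ = ⟪A u, x⟫ := (sa_inner hA u x).symm
  rw [h1, h2, h3, h4, h5]

theorem isomorphism_and_range_eq_of_norm_Vt_lt_one
    {H : Type*} [NormedAddCommGroup H] [InnerProductSpace ℝ H] [CompleteSpace H]
    (Vt QTmt QT QTmthalf QThalf : H →L[ℝ] H)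
    (hnorm : ‖Vt‖ < 1)
    (hQTmthalf_sa : IsSelfAdjoint QTmthalf) (hQThalf_sa : IsSelfAdjoint QThalf)
    (hQTmthalf_sq : QTmthalf.comp QTmthalf = QTmt) (hQThalf_sq : QThalf.comp QThalf = QT)
    (hrel : QTmt = QThalf.comp
      (((1 : H →L[ℝ] H) - Vt.comp (ContinuousLinearMap.adjoint Vt)).comp QThalf)) :
    (∃ W : H →L[ℝ] H,
        ((1 : H →L[ℝ] H) - Vt.comp (ContinuousLinearMap.adjoint Vt)).comp W = 1 ∧
        W.comp ((1 : H →L[ℝ] H) - Vt.comp (ContinuousLinearMap.adjoint Vt)) = 1) ∧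
      Set.range QTmthalf = Set.range QThalf := by
  set f : H →L[ℝ] H := Vt.comp (ContinuousLinearMap.adjoint Vt) with hf
  have hVnn : (0:ℝ) ≤ ‖Vt‖ := norm_nonneg _
  have hfnorm : ‖f‖ < 1 := by
    have h1 : ‖f‖ ≤ ‖Vt‖ * ‖ContinuousLinearMap.adjoint Vt‖ := opNorm_comp_le _ _
    have h2 : ‖ContinuousLinearMap.adjoint Vt‖ = ‖Vt‖ :=
      LinearIsometryEquiv.norm_map ContinuousLinearMap.adjoint Vt
    rw [h2] at h1
    nlinarith
  constructor
  · -- invertibility via geometric series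
    let u := Units.oneSub f hfnorm
    refine ⟨↑u⁻¹, ?_, ?_⟩
    · exact u.mul_inv
    · exact u.inv_mul
  · -- range equality
    have hid : ∀ x : H, ‖QTmthalf x‖ ^ 2
        = ‖QThalf x‖ ^ 2 - ‖ContinuousLinearMap.adjoint Vt (QThalf x)‖ ^ 2 := by
      intro x
      set y : H := QThalf x with hy
      have e1 : ‖QTmthalf x‖ ^ 2 = ⟪QTmt x, x⟫ := by
        rw [← hQTmthalf_sq]
        have h0 : ⟪(QTmthalf.comp QTmthalf) x, x⟫ = ⟪QTmthalf x, QTmthalf x⟫ := by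
          show ⟪QTmthalf (QTmthalf x), x⟫ = _
          rw [sa_inner hQTmthalf_sa (QTmthalf x) x]
        rw [h0, real_inner_self_eq_norm_sq]
      have e2 : ⟪QTmt x, x⟫ = ⟪((1 : H →L[ℝ] H) - f) y, y⟫ := by
        rw [hrel]
        show ⟪QThalf (((1 : H →L[ℝ] H) - f) (QThalf x)), x⟫ = _
        rw [sa_inner hQThalf_sa]
      have e3 : ⟪((1 : H →L[ℝ] H) - f) y, y⟫ = ‖y‖ ^ 2 - ‖ContinuousLinearMap.adjoint Vt y‖ ^ 2 := by
        have hfy : ⟪f y, y⟫ = ‖ContinuousLinearMap.adjoint Vt y‖ ^ 2 := by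
          show ⟪Vt (ContinuousLinearMap.adjoint Vt y), y⟫ = _
          rw [← adjoint_inner_right, real_inner_self_eq_norm_sq]
        rw [sub_apply, inner_sub_left, ContinuousLinearMap.one_apply, real_inner_self_eq_norm_sq, hfy]
      rw [e1, e2, e3]
    have hVtstar : ∀ y : H, ‖ContinuousLinearMap.adjoint Vt y‖ ≤ ‖Vt‖ * ‖y‖ := by
      intro y
      calc ‖ContinuousLinearMap.adjoint Vt y‖ ≤ ‖ContinuousLinearMap.adjoint Vt‖ * ‖y‖ :=
            le_opNorm _ _
        _ = ‖Vt‖ * ‖y‖ := by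
            rw [LinearIsometryEquiv.norm_map ContinuousLinearMap.adjoint Vt]
    -- upper bound: ‖QTmthalf x‖ ≤ ‖QThalf x‖
    have hupper : ∀ x : H, ‖QTmthalf x‖ ≤ 1 * ‖QThalf x‖ := by
      intro x
      rw [one_mul]
      apply le_of_sq_le_sq' _ _ (norm_nonneg _) (norm_nonneg _)
      rw [hid x]
      nlinarith [sq_nonneg ‖ContinuousLinearMap.adjoint Vt (QThalf x)‖]
    -- lower bound
    set s : ℝ := Real.sqrt (1 - ‖Vt‖ ^ 2) with hs
    have h1V : (0:ℝ) < 1 - ‖Vt‖ ^ 2 := by nlinarith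
    have hspos : 0 < s := Real.sqrt_pos.mpr h1V
    have hssq : s ^ 2 = 1 - ‖Vt‖ ^ 2 := Real.sq_sqrt h1V.le
    have hlower : ∀ x : H, ‖QThalf x‖ ≤ s⁻¹ * ‖QTmthalf x‖ := by
      intro x
      rw [← div_eq_inv_mul, le_div_iff₀ hspos, mul_comm]
      apply le_of_sq_le_sq' _ _ (by positivity) (norm_nonneg _)
      have h2 := hVtstar (QThalf x)
      have h3 := hid x
      have h4 : ‖ContinuousLinearMap.adjoint Vt (QThalf x)‖ ^ 2 ≤ ‖Vt‖ ^ 2 * ‖QThalf x‖ ^ 2 := by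
        nlinarith [norm_nonneg (ContinuousLinearMap.adjoint Vt (QThalf x)), norm_nonneg (QThalf x)]
      nlinarith
    exact Set.Subset.antisymm
      (range_subset_of_norm_le QTmthalf QThalf hQTmthalf_sa hQThalf_sa 1 hupper)
      (range_subset_of_norm_le QThalf QTmthalf hQThalf_sa hQTmthalf_sa s⁻¹ hlower)
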